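/- Let D and C be categories with finite limits and let U : D ⥤ C be a functor that preserves finite limits and is comonadic. If C is cartesian closed, then D is cartesian closed. -/

import Mathlib

open CategoryTheory CategoryTheory.Limits CategoryTheory.MonoidalCategory

universe v₁ v₂ u₁ u₂

/-- Let `D` and `C` be categories with finite limits and let `U : D ⥤ C`
be a functor that preserves finite limits and is comonadic (i.e. it admits a right adjoint
and the comparison functor to the category of coalgebras of the induced comonad is an
equivalence, which is exactly the Mathlib class `ComonadicLeftAdjoint U`).
If `C` is cartesian closed, then `D` is cartesian closed. -/
theorem coalgebra_cartesianClosed_of_comonadic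
    {C : Type u₁} [Category.{v₁} C] {D : Type u₂} [Category.{v₂} D]
    [HasFiniteLimits C] [HasFiniteLimits D]
    (U : D ⥤ C) [PreservesFiniteLimits U] [ComonadicLeftAdjoint U]
    [CartesianMonoidalCategory C] [MonoidalClosed C] :
    letI : CartesianMonoidalCategory D := CartesianMonoidalCategory.ofHasFiniteProducts
    Nonempty (MonoidalClosed D) := by
  letI : CartesianMonoidalCategory D := CartesianMonoidalCategory.ofHasFiniteProducts
  refine ⟨MonoidalClosed.mk fun B => ?_⟩
  have comm : (curriedTensor D).obj B ⋙ U ≅ U ⋙ (curriedTensor C).obj (U.obj B) :=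
    CartesianMonoidalCategory.prodComparisonNatIso U B
  have h1 : ((curriedTensor C).obj (U.obj B)).IsLeftAdjoint :=
    ((ihom.adjunction (U.obj B)).ofNatIsoLeft
      (NatIso.ofComponents (fun X => Iso.refl _) (by simp))).isLeftAdjoint
  have h2 : (U ⋙ (curriedTensor C).obj (U.obj B)).IsLeftAdjoint :=
    ((comonadicAdjunction U).comp (Adjunction.ofIsLeftAdjoint _)).isLeftAdjoint
  have h3 : ((curriedTensor D).obj B ⋙ U).IsLeftAdjoint :=
    ((Adjunction.ofIsLeftAdjoint _).ofNatIsoLeft comm.symm).isLeftAdjoint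
  have h4 : ((curriedTensor D).obj B).IsLeftAdjoint :=
    isLeftAdjoint_triangle_lift_comonadic U
  have h5 : (tensorLeft B).IsLeftAdjoint :=
    ((Adjunction.ofIsLeftAdjoint ((curriedTensor D).obj B)).ofNatIsoLeft
      (NatIso.ofComponents (fun X => Iso.refl _) (by simp))).isLeftAdjoint
  exact Closed.mk _ (Adjunction.ofIsLeftAdjoint (tensorLeft B))
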